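/- arXiv:2306.04416 — 2 statements merged into one kernel-verified Lean document; each statement's English description precedes it below -/
import Mathlib

section
/- The radial function W(x) = -4·log(1 + |x|²/(8√6)) on ℝ⁴ satisfies the equation Δ²W = e^W, where Δ² denotes the bilaplacian (the Laplacian applied twice). -/
/-- The Laplacian on ℝ⁴ : sum of second partial derivatives. -/
noncomputable def laplacian (f : EuclideanSpace ℝ (Fin 4) → ℝ)
    (x : EuclideanSpace ℝ (Fin 4)) : ℝ :=
  ∑ i : Fin 4,
    fderiv ℝ (fun y => fderiv ℝ f y (EuclideanSpace.single i 1)) x (EuclideanSpace.single i 1)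

/-- The standard bubble `W(x) = -4 log(1 + |x|²/(8√6))` on ℝ⁴. -/
noncomputable def W (x : EuclideanSpace ℝ (Fin 4)) : ℝ :=
  -4 * Real.log (1 + ‖x‖ ^ 2 / (8 * Real.sqrt 6))

open Real

private lemma norm_sq_sum (x : EuclideanSpace ℝ (Fin 4)) :
    ‖x‖ ^ 2 = ∑ i : Fin 4, x i ^ 2 := by
  rw [EuclideanSpace.norm_eq, Real.sq_sqrt (by positivity)]
  simp [Real.norm_eq_abs, sq_abs]

private lemma radial_fderiv_apply (φ p : ℝ → ℝ)
    (hp : ∀ s, 0 ≤ s → HasDerivAt φ (p s) s)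
    (y : EuclideanSpace ℝ (Fin 4)) (i : Fin 4) :
    fderiv ℝ (fun z : EuclideanSpace ℝ (Fin 4) => φ (‖z‖ ^ 2)) y
      (EuclideanSpace.single i 1) = p (‖y‖ ^ 2) * (2 * y i) := by
  have h1 := (hasStrictFDerivAt_norm_sq y).hasFDerivAt
  have h2 := (hp _ (by positivity : (0:ℝ) ≤ ‖y‖ ^ 2)).comp_hasFDerivAt y h1
  simp only [Function.comp_def] at h2
  rw [h2.fderiv]
  simp [EuclideanSpace.inner_single_right, real_inner_comm]

private lemma radial_lap (φ p q : ℝ → ℝ)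
    (hp : ∀ s, 0 ≤ s → HasDerivAt φ (p s) s)
    (hq : ∀ s, 0 ≤ s → HasDerivAt p (q s) s)
    (x : EuclideanSpace ℝ (Fin 4)) :
    laplacian (fun z => φ (‖z‖ ^ 2)) x
      = 8 * p (‖x‖ ^ 2) + 4 * ‖x‖ ^ 2 * q (‖x‖ ^ 2) := by
  unfold laplacian
  have key : ∀ i : Fin 4,
      fderiv ℝ (fun y => fderiv ℝ (fun z : EuclideanSpace ℝ (Fin 4) => φ (‖z‖ ^ 2)) y
        (EuclideanSpace.single i 1)) x (EuclideanSpace.single i 1)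
      = 2 * p (‖x‖ ^ 2) + 4 * q (‖x‖ ^ 2) * x i ^ 2 := by
    intro i
    have heq : (fun y => fderiv ℝ (fun z : EuclideanSpace ℝ (Fin 4) => φ (‖z‖ ^ 2)) y
        (EuclideanSpace.single i 1))
        = fun y => p (‖y‖ ^ 2) * (2 * y i) := by
      funext y; exact radial_fderiv_apply φ p hp y i
    rw [heq]
    have hA := (hq _ (by positivity : (0:ℝ) ≤ ‖x‖ ^ 2)).comp_hasFDerivAt x
      (hasStrictFDerivAt_norm_sq x).hasFDerivAt
    simp only [Function.comp_def] at hA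
    have hB : HasFDerivAt (fun y : EuclideanSpace ℝ (Fin 4) => 2 * y i)
        ((2 : ℝ) • (EuclideanSpace.proj i : EuclideanSpace ℝ (Fin 4) →L[ℝ] ℝ)) x :=
      ((EuclideanSpace.proj i : EuclideanSpace ℝ (Fin 4) →L[ℝ] ℝ).hasFDerivAt).const_mul 2
    have hprod := hA.mul hB
    rw [show (fun y : EuclideanSpace ℝ (Fin 4) => p (‖y‖ ^ 2) * (2 * y i)) = (fun x => p (‖x‖ ^ 2)) * (fun y => 2 * y i) from rfl, hprod.fderiv]
    simp [EuclideanSpace.inner_single_right, real_inner_comm, EuclideanSpace.proj,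
      EuclideanSpace.single_apply]
    ring
  rw [Finset.sum_congr rfl (fun i _ => key i)]
  rw [Finset.sum_add_distrib, Finset.sum_const]
  rw [← Finset.mul_sum, ← norm_sq_sum]
  simp
  ring

/-- `W` satisfies the fourth order equation `Δ²W = e^W` on ℝ⁴. -/
theorem bilaplacian_of_bubble :
    ∀ x : EuclideanSpace ℝ (Fin 4), laplacian (laplacian W) x = Real.exp (W x) := by
  intro x
  have hc2' : (8 * Real.sqrt 6) ^ 2 = 384 := by
    rw [mul_pow, sq_sqrt (by norm_num : (6:ℝ) ≥ 0)]; norm_num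
  obtain ⟨c, hc⟩ : ∃ c : ℝ, c = 8 * Real.sqrt 6 := ⟨_, rfl⟩
  have hcpos : 0 < c := by rw [hc]; positivity
  have hc2 : c ^ 2 = 384 := by rw [hc]; exact hc2'
  set φ : ℝ → ℝ := fun s => -4 * Real.log (1 + s / c) with hφ
  set p : ℝ → ℝ := fun s => -4 / (c + s) with hp'
  set q : ℝ → ℝ := fun s => 4 / (c + s) ^ 2 with hq'
  set G : ℝ → ℝ := fun s => (-32 * c - 16 * s) / (c + s) ^ 2 with hG'
  set P : ℝ → ℝ := fun s => 16 * (3 * c + s) / (c + s) ^ 3 with hP'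
  set Q : ℝ → ℝ := fun s => -32 * (4 * c + s) / (c + s) ^ 4 with hQ'
  have hden : ∀ s : ℝ, 0 ≤ s → c + s ≠ 0 := fun s hs => by positivity
  have h1 : ∀ s : ℝ, 0 ≤ s → (0:ℝ) < 1 + s / c := fun s hs => by positivity
  have hp : ∀ s, 0 ≤ s → HasDerivAt φ (p s) s := by
    intro s hs
    have h := (((hasDerivAt_id s).div_const c).const_add 1).log (h1 s hs).ne'
    have h2 := h.const_mul (-4 : ℝ)
    refine h2.congr_deriv ?_
    simp only [hp', id]
    field_simp
  have hq : ∀ s, 0 ≤ s → HasDerivAt p (q s) s := by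
    intro s hs
    have h := ((hasDerivAt_id s).const_add c)
    have h2 := (hasDerivAt_const s (-4 : ℝ)).div h (hden s hs)
    refine h2.congr_deriv ?_
    simp only [hq', id]
    field_simp [hden s hs]
    ring
  have hP : ∀ s, 0 ≤ s → HasDerivAt G (P s) s := by
    intro s hs
    have hnum : HasDerivAt (fun s : ℝ => -32 * c - 16 * s) (-16) s := by
      exact (((hasDerivAt_id' s).const_mul (16:ℝ)).const_sub (-32*c)).congr_deriv (by ring)
    have hd : HasDerivAt (fun s : ℝ => (c + s) ^ 2) (2 * (c + s)) s := by
      have := ((hasDerivAt_id s).const_add c).pow 2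
      simpa [Pi.pow_def] using this
    have h2 := hnum.div hd (pow_ne_zero 2 (hden s hs))
    refine h2.congr_deriv ?_
    simp only [hP', id]
    field_simp [hden s hs]
    ring
  have hQ : ∀ s, 0 ≤ s → HasDerivAt P (Q s) s := by
    intro s hs
    have hnum : HasDerivAt (fun s : ℝ => 16 * (3 * c + s)) 16 s := by
      simpa using (((hasDerivAt_id s).const_add (3*c)).const_mul (16 : ℝ))
    have hd : HasDerivAt (fun s : ℝ => (c + s) ^ 3) (3 * (c + s) ^ 2) s := by
      have := ((hasDerivAt_id s).const_add c).pow 3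
      simpa [Pi.pow_def] using this
    have h2 := hnum.div hd (pow_ne_zero 3 (hden s hs))
    refine h2.congr_deriv ?_
    simp only [hQ', id]
    field_simp [hden s hs]
    ring
  have hWeq : W = fun z : EuclideanSpace ℝ (Fin 4) => φ (‖z‖ ^ 2) := by
    funext z; rw [W, hφ, hc]
  have hlap1 : laplacian W = fun z : EuclideanSpace ℝ (Fin 4) => G (‖z‖ ^ 2) := by
    funext z
    rw [hWeq, radial_lap φ p q hp hq z]
    have h0 : (0:ℝ) ≤ ‖z‖ ^ 2 := by positivity
    simp only [hp', hq', hG']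
    field_simp [hden _ h0]
    ring
  rw [hlap1, radial_lap G P Q hP hQ x]
  have h0 : (0:ℝ) ≤ ‖x‖ ^ 2 := by positivity
  set s : ℝ := ‖x‖ ^ 2 with hs
  have hcs : c + s ≠ 0 := hden s h0
  have hWx : Real.exp (W x) = c ^ 4 / (c + s) ^ 4 := by
    have ht : (0:ℝ) < 1 + s / c := h1 s h0
    have hWv : W x = -4 * Real.log (1 + s / c) := by rw [W, hc, hs]
    rw [hWv,
      show (-4 : ℝ) * Real.log (1 + s / c) = -((4:ℕ) * Real.log (1 + s/c)) by norm_num,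
      Real.exp_neg, Real.exp_nat_mul, Real.exp_log ht,
      show (1 + s/c) = (c+s)/c by field_simp, div_pow]
    field_simp
  rw [hWx]
  simp only [hP', hQ']
  have h384 : c ^ 4 = 384 * c ^ 2 := by rw [← hc2]; ring
  field_simp
  linear_combination (-(c ^ 2)) * hc2
end

section
/- The integral of e^{W(x)} over ℝ⁴, where W(x) = -4·log(1 + |x|²/(8√6)), equals 64π². -/
open MeasureTheory

noncomputable def cW : ℝ := 8 * Real.sqrt 6

lemma cW_pos : 0 < cW := by
  have : (0:ℝ) < Real.sqrt 6 := Real.sqrt_pos.2 (by norm_num)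
  unfold cW; positivity

lemma cW_sq : cW ^ 2 = 384 := by
  have h : Real.sqrt 6 ^ 2 = 6 := Real.sq_sqrt (by norm_num)
  unfold cW; nlinarith [h]

lemma t_pos (r : ℝ) : 0 < 1 + r ^ 2 / cW := by
  have := cW_pos; positivity

noncomputable def gW (r : ℝ) : ℝ :=
  cW ^ 2 / 2 * (1 / (3 * (1 + r ^ 2 / cW) ^ 3) - 1 / (2 * (1 + r ^ 2 / cW) ^ 2))

lemma gW_deriv (r : ℝ) :
    HasDerivAt gW (r ^ 3 * ((1 + r ^ 2 / cW) ^ 4)⁻¹) r := by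
  have hc := cW_pos
  have ht := t_pos r
  have htne : (1 + r ^ 2 / cW) ≠ 0 := ne_of_gt ht
  have h1 : HasDerivAt (fun r : ℝ => 1 + r ^ 2 / cW) (2 * r / cW) r := by
    simpa using ((hasDerivAt_pow 2 r).div_const cW).const_add 1
  have h3 : HasDerivAt (fun r : ℝ => (1 + r ^ 2 / cW) ^ 3)
      (3 * (1 + r ^ 2 / cW) ^ 2 * (2 * r / cW)) r := by
    simpa using (h1.fun_pow 3)
  have h2 : HasDerivAt (fun r : ℝ => (1 + r ^ 2 / cW) ^ 2)
      (2 * (1 + r ^ 2 / cW) ^ 1 * (2 * r / cW)) r := by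
    simpa using (h1.fun_pow 2)
  have h3i := h3.inv (pow_ne_zero 3 htne)
  have h2i := h2.inv (pow_ne_zero 2 htne)
  have h := ((h3i.div_const 3).sub (h2i.div_const 2)).const_mul (cW ^ 2 / 2)
  have heq : (fun r : ℝ => cW ^ 2 / 2 *
      (((1 + r ^ 2 / cW) ^ 3)⁻¹ / 3 - ((1 + r ^ 2 / cW) ^ 2)⁻¹ / 2)) = gW := by
    funext x
    unfold gW
    field_simp
  have h' : HasDerivAt (fun r : ℝ => cW ^ 2 / 2 *
      (((1 + r ^ 2 / cW) ^ 3)⁻¹ / 3 - ((1 + r ^ 2 / cW) ^ 2)⁻¹ / 2)) _ r := h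
  rw [heq] at h'
  convert h' using 1
  field_simp
  ring

lemma gW_tendsto : Filter.Tendsto gW Filter.atTop (nhds 0) := by
  have hc := cW_pos
  have h1 : Filter.Tendsto (fun r : ℝ => 1 + r ^ 2 / cW) Filter.atTop Filter.atTop := by
    apply Filter.tendsto_atTop_add_const_left
    exact (Filter.tendsto_pow_atTop (by norm_num)).atTop_div_const hc
  have h3 : Filter.Tendsto (fun r : ℝ => ((1 + r ^ 2 / cW) ^ 3)⁻¹)
      Filter.atTop (nhds 0) :=
    Filter.Tendsto.inv_tendsto_atTop
      ((Filter.tendsto_pow_atTop (n := 3) (by norm_num)).comp h1)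
  have h2 : Filter.Tendsto (fun r : ℝ => ((1 + r ^ 2 / cW) ^ 2)⁻¹)
      Filter.atTop (nhds 0) :=
    Filter.Tendsto.inv_tendsto_atTop
      ((Filter.tendsto_pow_atTop (n := 2) (by norm_num)).comp h1)
  have h := (((h3.div_const 3).sub (h2.div_const 2)).const_mul (cW ^ 2 / 2))
  have heq : gW = fun r : ℝ => cW ^ 2 / 2 *
      (((1 + r ^ 2 / cW) ^ 3)⁻¹ / 3 - ((1 + r ^ 2 / cW) ^ 2)⁻¹ / 2) := by
    funext x
    unfold gW
    have := t_pos x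
    field_simp
  rw [heq]
  simpa using h

lemma radial_integral :
    ∫ y in Set.Ioi (0:ℝ), y ^ 3 * ((1 + y ^ 2 / cW) ^ 4)⁻¹ = 32 := by
  have hc := cW_pos
  have key := MeasureTheory.integral_Ioi_of_hasDerivAt_of_nonneg
    (g := gW) (g' := fun y => y ^ 3 * ((1 + y ^ 2 / cW) ^ 4)⁻¹) (a := 0)
    (gW_deriv 0).continuousAt.continuousWithinAt
    (fun x _ => gW_deriv x)
    (fun x hx => by
      have := t_pos x
      have hx0 : 0 < x := hx
      positivity)
    gW_tendsto
  rw [key]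
  have : gW 0 = -32 := by
    unfold gW
    rw [cW_sq]
    norm_num
  rw [this]; norm_num

/-- The total integral of `e^W` over ℝ⁴ equals `64π²`. -/
theorem integral_exp_bubble :
    ∫ x : EuclideanSpace ℝ (Fin 4), Real.exp (W x) = 64 * Real.pi ^ 2 := by
  have hrw : ∀ x : EuclideanSpace ℝ (Fin 4),
      Real.exp (W x) = ((1 + ‖x‖ ^ 2 / cW) ^ 4)⁻¹ := by
    intro x
    have ht : 0 < 1 + ‖x‖ ^ 2 / cW := t_pos _
    rw [W, show (-4 : ℝ) * Real.log (1 + ‖x‖ ^ 2 / (8 * Real.sqrt 6)) =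
      -((4:ℕ) * Real.log (1 + ‖x‖ ^ 2 / cW)) by rw [cW]; push_cast; ring,
      Real.exp_neg, Real.exp_nat_mul, Real.exp_log ht]
  simp only [hrw]
  have key := MeasureTheory.integral_fun_norm_addHaar
    (volume : Measure (EuclideanSpace ℝ (Fin 4)))
    (fun y : ℝ => ((1 + y ^ 2 / cW) ^ 4)⁻¹)
  have hdim : Module.finrank ℝ (EuclideanSpace ℝ (Fin 4)) = 4 := by
    simp [finrank_euclideanSpace]
  rw [hdim] at key
  rw [key]
  have hball : (volume (Metric.ball (0 : EuclideanSpace ℝ (Fin 4)) 1)).toReal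
      = Real.pi ^ 2 / 2 := by
    rw [EuclideanSpace.volume_ball]
    have hγ : Real.Gamma ((Fintype.card (Fin 4) : ℝ) / 2 + 1) = 2 := by
      norm_num
    rw [hγ]
    rw [ENNReal.toReal_mul]
    simp only [Fintype.card_fin]
    rw [ENNReal.toReal_pow, ENNReal.toReal_ofReal (by norm_num),
      ENNReal.toReal_ofReal (by positivity)]
    rw [show Real.sqrt Real.pi ^ 4 = (Real.sqrt Real.pi ^ 2) ^ 2 by ring,
      Real.sq_sqrt Real.pi_pos.le]
    ring
  rw [measureReal_def, hball]
  have hint : ∫ y in Set.Ioi (0:ℝ), y ^ (4 - 1) • ((1 + y ^ 2 / cW) ^ 4)⁻¹ = 32 := by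
    simp only [smul_eq_mul]
    simpa using radial_integral
  rw [hint]
  simp only [nsmul_eq_mul, smul_eq_mul]
  ring
end
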